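/- Let T be a finite nonempty index set, let μ, ν : T → ℝ≥0 be nonnegative weights with Σ_{t∈T} μ(t) ≤ 1, let d ≥ 1, and let b : T → ℝ^d satisfy ‖b(t)‖₂ ≤ 1 for all t ∈ T (Euclidean norm). Suppose the smallest eigenvalue of Σ := Σ_{t∈T} ν(t) b(t) b(t)ᵀ satisfies λ_min(Σ) ≥ 1/C for some C > 0. Then for every m ≥ 1 and every matrix X ∈ ℝ^{m×d}, Σ_{t∈T} μ(t) ‖X b(t)‖₁ ≤ C · Σ_{t∈T} ν(t) ‖X b(t)‖₁, where ‖·‖₁ on vectors is the sum of absolute values of entries. -/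

import Mathlib

open Matrix

/-- The `L1` norm of a vector: the sum of the absolute values of its entries. -/
def vecL1 {n : Type*} [Fintype n] (x : n → ℝ) : ℝ := ∑ i, |x i|

/-- The Euclidean norm of a vector. -/
noncomputable def eucNorm {n : Type*} [Fintype n] (x : n → ℝ) : ℝ :=
  Real.sqrt (∑ i, x i ^ 2)

lemma eucNorm_nonneg {n : Type*} [Fintype n] (x : n → ℝ) : 0 ≤ eucNorm x :=
  Real.sqrt_nonneg _

/-- Cauchy–Schwarz. -/
lemma abs_dot_le {n : Type*} [Fintype n] (x y : n → ℝ) :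
    |∑ j, x j * y j| ≤ eucNorm x * eucNorm y := by
  have h := Finset.sum_mul_sq_le_sq_mul_sq Finset.univ x y
  have := Real.sqrt_le_sqrt h
  rwa [Real.sqrt_sq_eq_abs,
    Real.sqrt_mul (Finset.sum_nonneg fun i _ => sq_nonneg _)] at this

/-- Quadratic form lower bound from the smallest eigenvalue. -/
lemma quad_lb {d : ℕ} (A : Matrix (Fin d) (Fin d) ℝ) (hA : A.IsHermitian) (c : ℝ)
    (hc : ∀ i, c ≤ hA.eigenvalues i) (x : Fin d → ℝ) :
    c * (∑ j, x j ^ 2) ≤ x ⬝ᵥ A.mulVec x := by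
  set B := hA.eigenvectorBasis with hB
  set y : EuclideanSpace ℝ (Fin d) := WithLp.toLp 2 x with hy
  set r : Fin d → ℝ := fun i => B.repr y i with hr
  have hdot : ∀ i : Fin d, x ⬝ᵥ ⇑(B i) = r i := by
    intro i
    have : r i = inner ℝ (B i) y := B.repr_apply_apply y i
    rw [this]
    simp only [PiLp.inner_apply, RCLike.inner_apply, starRingEnd_apply, star_trivial]
    simp [dotProduct, mul_comm, hy]
  have hxsum : x = ∑ i, r i • (⇑(B i) : Fin d → ℝ) := by
    have h := congrArg WithLp.ofLp (B.sum_repr y).symm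
    simpa [hy, hr] using h
  -- quadratic form in eigencoordinates
  have dot_sum : ∀ {ι : Type} [Fintype ι] (f : ι → Fin d → ℝ),
      x ⬝ᵥ (∑ i, f i) = ∑ i, x ⬝ᵥ f i := by
    intro ι _ f
    simp only [dotProduct, Finset.sum_apply, Finset.mul_sum]
    exact Finset.sum_comm
  have hmv : A.mulVec x = ∑ i, r i • (A.mulVec (⇑(B i) : Fin d → ℝ)) := by
    conv_lhs => rw [hxsum]
    rw [← Matrix.mulVecLin_apply, map_sum]
    exact Finset.sum_congr rfl fun i _ => by
      rw [_root_.map_smul, Matrix.mulVecLin_apply]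
  have hquad : x ⬝ᵥ A.mulVec x = ∑ i, hA.eigenvalues i * r i ^ 2 := by
    rw [hmv, dot_sum]
    refine Finset.sum_congr rfl fun i _ => ?_
    rw [hA.mulVec_eigenvectorBasis, dotProduct_smul, dotProduct_smul, hdot i]
    simp only [smul_eq_mul]
    ring
  -- Parseval
  have hpar : ∑ j, x j ^ 2 = ∑ i, r i ^ 2 := by
    have h1 : ∑ i, (inner ℝ y (B i) : ℝ) * inner ℝ (B i) y = inner ℝ y y :=
      B.sum_inner_mul_inner y y
    have h2 : (inner ℝ y y : ℝ) = ∑ j, x j ^ 2 := by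
      simp only [PiLp.inner_apply, RCLike.inner_apply, starRingEnd_apply, star_trivial]
      exact Finset.sum_congr rfl fun j _ => (sq (x j)).symm
    have h3 : ∀ i, (inner ℝ y (B i) : ℝ) = r i := by
      intro i; rw [real_inner_comm]; exact (B.repr_apply_apply y i).symm
    have h4 : ∀ i, (inner ℝ (B i) y : ℝ) = r i := fun i => (B.repr_apply_apply y i).symm
    calc ∑ j, x j ^ 2 = (inner ℝ y y : ℝ) := h2.symm
      _ = ∑ i, (inner ℝ y (B i) : ℝ) * inner ℝ (B i) y := h1.symm
      _ = ∑ i, r i ^ 2 := Finset.sum_congr rfl fun i _ => by rw [h3, h4, sq]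
  rw [hquad, hpar, Finset.mul_sum]
  exact Finset.sum_le_sum fun i _ =>
    mul_le_mul_of_nonneg_right (hc i) (sq_nonneg _)

/-- Abstract form of the bound `C_eff ≤ C_A C_H` (Theorems 3 and 4): if the belief coverage
matrix `Σ = Σ_t ν(t) b(t)b(t)ᵀ` has smallest eigenvalue at least `1/C`, then for every
matrix `X`, `Σ_t μ(t) ‖X b(t)‖₁ ≤ C Σ_t ν(t) ‖X b(t)‖₁`. -/
theorem target_error_le_coverage_mul_behavior_error
    {T : Type*} [Fintype T] [Nonempty T]
    (μ ν : T → ℝ) (hμ : ∀ t, 0 ≤ μ t) (hν : ∀ t, 0 ≤ ν t)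
    (hμsum : ∑ t, μ t ≤ 1)
    (d : ℕ) (hd : 1 ≤ d)
    (b : T → Fin d → ℝ) (hb : ∀ t, eucNorm (b t) ≤ 1)
    (Sigm : Matrix (Fin d) (Fin d) ℝ)
    (hSig : Sigm = ∑ t, ν t • Matrix.vecMulVec (b t) (b t))
    (hherm : Sigm.IsHermitian)
    (C : ℝ) (hC : 0 < C)
    (hmin : 1 / C ≤ ⨅ i, hherm.eigenvalues i) :
    ∀ (m : ℕ), 1 ≤ m → ∀ X : Matrix (Fin m) (Fin d) ℝ,
      ∑ t, μ t * vecL1 (X.mulVec (b t)) ≤ C * ∑ t, ν t * vecL1 (X.mulVec (b t)) := by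
  intro m hm X
  haveI : Nonempty (Fin d) := Fin.pos_iff_nonempty.mp hd
  have heig : ∀ i, 1 / C ≤ hherm.eigenvalues i := fun i =>
    hmin.trans (ciInf_le (Set.Finite.bddBelow (Set.finite_range _)) i)
  -- the key per-row bound
  have hrow : ∀ x : Fin d → ℝ, eucNorm x ≤ C * ∑ t, ν t * |∑ j, x j * b t j| := by
    intro x
    set R := ∑ t, ν t * |∑ j, x j * b t j| with hR
    have hRnn : 0 ≤ R :=
      Finset.sum_nonneg fun t _ => mul_nonneg (hν t) (abs_nonneg _)
    set N := eucNorm x with hNdef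
    have hNnn : 0 ≤ N := eucNorm_nonneg x
    have hN2 : N ^ 2 = ∑ j, x j ^ 2 :=
      Real.sq_sqrt (Finset.sum_nonneg fun j _ => sq_nonneg _)
    have hxb : ∀ t, |∑ j, x j * b t j| ≤ N := fun t =>
      (abs_dot_le x (b t)).trans
        (mul_le_of_le_one_right hNnn (hb t))
    have hquad := quad_lb Sigm hherm (1 / C) heig x
    -- compute the quadratic form
    have hSq : x ⬝ᵥ Sigm.mulVec x = ∑ t, ν t * (∑ j, x j * b t j) ^ 2 := by
      rw [hSig]
      have h1 : (∑ t, ν t • Matrix.vecMulVec (b t) (b t)).mulVec x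
          = ∑ t, (ν t • Matrix.vecMulVec (b t) (b t)).mulVec x := by
        ext j
        simp only [Matrix.mulVec, dotProduct, Matrix.sum_apply,
          Finset.sum_apply, Finset.sum_mul]
        exact Finset.sum_comm
      rw [h1]
      have h2 : x ⬝ᵥ (∑ t, (ν t • Matrix.vecMulVec (b t) (b t)).mulVec x)
          = ∑ t, x ⬝ᵥ ((ν t • Matrix.vecMulVec (b t) (b t)).mulVec x) := by
        simp only [dotProduct, Finset.sum_apply, Finset.mul_sum]
        exact Finset.sum_comm
      rw [h2]
      refine Finset.sum_congr rfl fun t _ => ?_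
      simp only [dotProduct, Matrix.mulVec, Matrix.smul_apply,
        Matrix.vecMulVec_apply, smul_eq_mul]
      rw [sq, Finset.sum_mul_sum, Finset.mul_sum]
      refine Finset.sum_congr rfl fun j _ => ?_
      rw [Finset.mul_sum, Finset.mul_sum]
      exact Finset.sum_congr rfl fun k _ => by ring
    have hQle : x ⬝ᵥ Sigm.mulVec x ≤ N * R := by
      rw [hSq, hR, Finset.mul_sum]
      refine Finset.sum_le_sum fun t _ => ?_
      have hs : (∑ j, x j * b t j) ^ 2 ≤ N * |∑ j, x j * b t j| := by
        calc (∑ j, x j * b t j) ^ 2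
            = |∑ j, x j * b t j| * |∑ j, x j * b t j| := by
              rw [abs_mul_abs_self, sq]
          _ ≤ N * |∑ j, x j * b t j| :=
              mul_le_mul_of_nonneg_right (hxb t) (abs_nonneg _)
      calc ν t * (∑ j, x j * b t j) ^ 2
          ≤ ν t * (N * |∑ j, x j * b t j|) :=
            mul_le_mul_of_nonneg_left hs (hν t)
        _ = N * (ν t * |∑ j, x j * b t j|) := by ring
    have hfinal : (1 / C) * N ^ 2 ≤ N * R := by
      rw [hN2]; exact hquad.trans hQle
    rcases eq_or_lt_of_le hNnn with h0 | hpos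
    · rw [← h0]; positivity
    · have h1 : N ^ 2 ≤ C * (N * R) := by
        have h := mul_le_mul_of_nonneg_left hfinal hC.le
        have he : C * (1 / C * N ^ 2) = N ^ 2 := by field_simp
        linarith
      have h2 : N * N ≤ (C * R) * N := by nlinarith [h1]
      exact le_of_mul_le_mul_right h2 hpos
  -- assemble
  set K := ∑ i, eucNorm (X i) with hK
  have hKnn : 0 ≤ K := Finset.sum_nonneg fun i _ => eucNorm_nonneg _
  have hL1 : ∀ t, vecL1 (X.mulVec (b t)) = ∑ i, |∑ j, X i j * b t j| := fun t => rfl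
  have step1 : ∑ t, μ t * vecL1 (X.mulVec (b t)) ≤ K := by
    calc ∑ t, μ t * vecL1 (X.mulVec (b t))
        ≤ ∑ t, μ t * K := by
          refine Finset.sum_le_sum fun t _ => mul_le_mul_of_nonneg_left ?_ (hμ t)
          rw [hL1 t, hK]
          exact Finset.sum_le_sum fun i _ =>
            (abs_dot_le (X i) (b t)).trans
              (mul_le_of_le_one_right (eucNorm_nonneg _) (hb t))
      _ = (∑ t, μ t) * K := (Finset.sum_mul ..).symm
      _ ≤ 1 * K := mul_le_mul_of_nonneg_right hμsum hKnn
      _ = K := one_mul K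
  have step2 : K ≤ C * ∑ t, ν t * vecL1 (X.mulVec (b t)) := by
    calc K ≤ ∑ i, C * ∑ t, ν t * |∑ j, X i j * b t j| :=
          Finset.sum_le_sum fun i _ => hrow (X i)
      _ = C * ∑ i, ∑ t, ν t * |∑ j, X i j * b t j| := (Finset.mul_sum ..).symm
      _ = C * ∑ t, ν t * vecL1 (X.mulVec (b t)) := by
          rw [Finset.sum_comm]
          congr 1
          refine Finset.sum_congr rfl fun t _ => ?_
          rw [hL1 t, Finset.mul_sum]
  exact step1.trans step2
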